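/- Let Φ: (0,∞) → (0,1] be nondecreasing with lim_{u→0} log Φ(u)/log u = t_* > 0, let c ∈ ℝ, κ > 0, and define ζ_ε(z) = min{0, z − c/|log ε|} + log κ/|log ε| and H⁻(z) = min{t_* z, 0}. Then for every C > 0: lim_{ε→0} sup_{z ≥ −C} | (1/|log ε|)·log Φ(ε^{−ζ_ε(z)}) − H⁻(z) | = 0. -/

import Mathlib

set_option maxHeartbeats 1000000


open Set Filter Real

/-- Lemma 3.10 (one-sided version): if `Φ : (0,∞) → (0,1]` is nondecreasing with tail
exponent `lim_{u→0} log Φ(u)/log u = t_* > 0`, then with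
`ζ_ε(z) = min{0, z − c/|log ε|} + log κ/|log ε|` and `H⁻(z) = min{t_* z, 0}`, the
quantity `(1/|log ε|)·log Φ(ε^{−ζ_ε(z)})` converges to `H⁻(z)` uniformly on `z ≥ −C`. -/
theorem stmt15 (Φ : ℝ → ℝ) (hrange : ∀ u : ℝ, 0 < u → Φ u ∈ Ioc (0 : ℝ) 1)
    (hmono : MonotoneOn Φ (Ioi 0))
    (tstar : ℝ) (htstar : 0 < tstar)
    (hlim : Tendsto (fun u => Real.log (Φ u) / Real.log u)
      (nhdsWithin 0 (Ioi 0)) (nhds tstar))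
    (c κ : ℝ) (hκ : 0 < κ) :
    ∀ C > (0 : ℝ), ∀ η > (0 : ℝ), ∃ ε₀ ∈ Ioo (0 : ℝ) 1, ∀ ε ∈ Ioo (0 : ℝ) ε₀,
      ∀ z : ℝ, -C ≤ z →
        |(1 / |Real.log ε|) *
            Real.log (Φ (ε ^ (-(min 0 (z - c / |Real.log ε|) +
              Real.log κ / |Real.log ε|)))) -
          min (tstar * z) 0| < η := by
  intro C hC η hη
  set ρ : ℝ := min 1 (η / (2 * (C + 1))) with hρdef
  have hρpos : 0 < ρ := lt_min one_pos (by positivity)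
  have hρ1 : ρ ≤ 1 := min_le_left _ _
  have hρC : ρ * C < η / 2 := by
    have h1 : ρ ≤ η / (2 * (C + 1)) := min_le_right _ _
    have h2 : ρ * C ≤ η / (2 * (C + 1)) * C :=
      mul_le_mul_of_nonneg_right h1 (le_of_lt hC)
    have h3 : η / (2 * (C + 1)) * C < η / 2 := by
      rw [div_mul_eq_mul_div, div_lt_div_iff₀ (by positivity) (by norm_num)]
      nlinarith
    linarith
  obtain ⟨d, hd, hball⟩ := Metric.tendsto_nhdsWithin_nhds.mp hlim ρ hρpos
  set u₁ : ℝ := min d 1 with hu₁def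
  have hu₁pos : 0 < u₁ := lt_min hd one_pos
  have hu₁le : u₁ ≤ 1 := min_le_right _ _
  have hkey : ∀ u : ℝ, 0 < u → u < u₁ →
      ∃ q : ℝ, Real.log (Φ u) = q * Real.log u ∧ |q - tstar| < ρ := by
    intro u hu hu'
    have hlogu : Real.log u < 0 := Real.log_neg hu (lt_of_lt_of_le hu' hu₁le)
    refine ⟨Real.log (Φ u) / Real.log u,
      (div_mul_cancel₀ _ (ne_of_lt hlogu)).symm, ?_⟩
    have := hball (mem_Ioi.mpr hu) (by
      rw [Real.dist_eq, sub_zero, abs_of_pos hu]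
      exact lt_of_lt_of_le hu' (min_le_left _ _))
    rwa [Real.dist_eq] at this
  clear_value ρ u₁
  clear hball hρdef hu₁def
  set δ : ℝ := η / (4 * (tstar + 1)) with hδdef
  have hδpos : 0 < δ := by positivity
  have hδ4 : (tstar + 1) * δ = η / 4 := by rw [hδdef]; field_simp
  clear_value δ
  set M : ℝ := |c| + |Real.log κ| with hMdef
  have hM : 0 ≤ M := by positivity
  have hMc : |Real.log κ - c| ≤ M := by
    rw [hMdef]
    calc |Real.log κ - c| ≤ |Real.log κ| + |c| := abs_sub _ _
      _ = |c| + |Real.log κ| := by ring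
  have hMc' : |c| ≤ M := by rw [hMdef]; exact le_add_of_nonneg_right (abs_nonneg _)
  clear_value M
  set A₁ : ℝ := |Real.log (Φ κ)| + tstar * |c| with hA₁def
  have hA₁ : 0 ≤ A₁ := by positivity
  set L₀ : ℝ := 1 + A₁ / η + 2 * (tstar + 1) * M / η +
      max 0 ((Real.log κ - c - Real.log u₁) / δ) + M / δ with hL₀def
  refine ⟨min (1/2) (Real.exp (-L₀)), ⟨lt_min (by norm_num) (Real.exp_pos _),
    lt_of_le_of_lt (min_le_left _ _) (by norm_num)⟩, ?_⟩
  rintro ε ⟨hε0, hε1⟩ z hz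
  have hεlt1 : ε < 1 := lt_of_lt_of_le (lt_of_lt_of_le hε1 (min_le_left _ _)) (by norm_num)
  have hlogneg : Real.log ε < 0 := Real.log_neg hε0 hεlt1
  set L : ℝ := |Real.log ε| with hLdef
  have hLe : Real.log ε = -L := by rw [hLdef, abs_of_neg hlogneg]; ring
  have hLpos : 0 < L := abs_pos.mpr (ne_of_lt hlogneg)
  have hLne : L ≠ 0 := ne_of_gt hLpos
  have hLL₀ : L₀ < L := by
    have h1 : Real.log ε < Real.log (min (1/2) (Real.exp (-L₀))) :=
      Real.log_lt_log hε0 hε1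
    have h2 : Real.log (min (1/2) (Real.exp (-L₀))) ≤ Real.log (Real.exp (-L₀)) :=
      Real.log_le_log (lt_min (by norm_num) (Real.exp_pos _)) (min_le_right _ _)
    rw [Real.log_exp] at h2
    have h3 : Real.log ε < -L₀ := lt_of_lt_of_le h1 h2
    rw [hLe] at h3; linarith
  clear_value L
  clear hε1 hlogneg hLdef
  have hc1 : 0 ≤ A₁ / η := by positivity
  have hc2 : 0 ≤ 2 * (tstar + 1) * M / η := by positivity
  have hc3 : (0:ℝ) ≤ max 0 ((Real.log κ - c - Real.log u₁) / δ) := le_max_left _ _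
  have hc4 : 0 ≤ M / δ := by positivity
  have hL1 : A₁ < η * L := by
    have h : A₁ / η < L := by rw [hL₀def] at hLL₀; linarith
    have := (div_lt_iff₀ hη).mp h; linarith [mul_comm L η]
  have hL2 : 2 * (tstar + 1) * M < η * L := by
    have h : 2 * (tstar + 1) * M / η < L := by rw [hL₀def] at hLL₀; linarith
    have := (div_lt_iff₀ hη).mp h; linarith [mul_comm L η]
  have hL3 : Real.log κ - c - Real.log u₁ < δ * L := by
    have h : (Real.log κ - c - Real.log u₁) / δ < L := by
      have := le_max_right (0:ℝ) ((Real.log κ - c - Real.log u₁) / δ)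
      rw [hL₀def] at hLL₀; linarith
    have := (div_lt_iff₀ hδpos).mp h; linarith [mul_comm L δ]
  have hL4 : M < δ * L := by
    have h : M / δ < L := by rw [hL₀def] at hLL₀; linarith
    have := (div_lt_iff₀ hδpos).mp h; linarith [mul_comm L δ]
  clear_value L₀
  clear hLL₀ hL₀def hc1 hc2 hc3 hc4
  clear L₀
  by_cases hcase : z - c / L < 0
  · -- z < c/L : exponential regime
    have hminz : min 0 (z - c / L) = z - c / L := min_eq_right (le_of_lt hcase)
    obtain ⟨E, hEdef⟩ : ∃ E : ℝ, E = z * L - c + Real.log κ := ⟨_, rfl⟩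
    have hu : ε ^ (-(min 0 (z - c / L) + Real.log κ / L)) = Real.exp E := by
      rw [hminz, Real.rpow_def_of_pos hε0, hLe]
      congr 1
      rw [hEdef]
      field_simp
    rw [hu]
    have hm : |(Real.log κ - c) / L| ≤ M / L := by
      rw [abs_div, abs_of_pos hLpos]
      gcongr
    have hMLδ : M / L < δ := (div_lt_iff₀ hLpos).mpr (by linarith [mul_comm δ L])
    by_cases hzδ : z ≤ -δ
    · -- z ≤ -δ : deep regime
      have hE1 : E < Real.log u₁ := by
        have : z * L ≤ -δ * L := mul_le_mul_of_nonneg_right hzδ (le_of_lt hLpos)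
        rw [hEdef]; linarith
      have huu₁ : Real.exp E < u₁ := by
        have := Real.exp_lt_exp.mpr hE1
        rwa [Real.exp_log hu₁pos] at this
      obtain ⟨q, heq, hq⟩ := hkey (Real.exp E) (Real.exp_pos E) huu₁
      rw [Real.log_exp] at heq
      rw [heq]
      have hmineq : min (tstar * z) 0 = tstar * z := by
        apply min_eq_left
        have h1 : tstar * z ≤ tstar * (-δ) := mul_le_mul_of_nonneg_left hzδ htstar.le
        have h2 : 0 ≤ tstar * δ := mul_nonneg htstar.le hδpos.le
        linarith
      rw [hmineq]
      have hD : 1 / L * (q * E) - tstar * z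
          = (q - tstar) * z + q * ((Real.log κ - c) / L) := by
        rw [hEdef]; field_simp; ring
      rw [hD]
      have hzabs : |z| ≤ C := abs_le.mpr ⟨hz, by linarith⟩
      have hqabs : |q| ≤ tstar + 1 := by
        have h1 : |q| ≤ |q - tstar| + |tstar| := by
          calc |q| = |(q - tstar) + tstar| := by ring_nf
            _ ≤ |q - tstar| + |tstar| := abs_add_le _ _
        rw [abs_of_pos htstar] at h1
        linarith
      have hb1 : |(q - tstar) * z| ≤ ρ * C := by
        rw [abs_mul]
        exact mul_le_mul (le_of_lt hq) hzabs (abs_nonneg _) (le_of_lt hρpos)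
      have hb2 : |q * ((Real.log κ - c) / L)| ≤ (tstar + 1) * (M / L) := by
        rw [abs_mul]
        exact mul_le_mul hqabs hm (abs_nonneg _) (by linarith)
      have htri : |(q - tstar) * z + q * ((Real.log κ - c) / L)| ≤
          ρ * C + (tstar + 1) * (M / L) :=
        (abs_add_le _ _).trans (by linarith)
      have hML : (tstar + 1) * (M / L) < η / 2 := by
        rw [← mul_div_assoc, div_lt_iff₀ hLpos]
        linarith
      linarith
    · -- -δ < z < c/L : intermediate regime
      push_neg at hzδ
      have hΦE := hrange (Real.exp E) (Real.exp_pos E)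
      have hup : 1 / L * Real.log (Φ (Real.exp E)) ≤ 0 := by
        have h1 : Real.log (Φ (Real.exp E)) ≤ 0 := Real.log_nonpos (le_of_lt hΦE.1) hΦE.2
        exact mul_nonpos_of_nonneg_of_nonpos (by positivity) h1
      obtain ⟨E₀, hE₀def⟩ : ∃ E₀ : ℝ, E₀ = -δ * L - c + Real.log κ := ⟨_, rfl⟩
      have hE₀E : E₀ ≤ E := by
        have : -δ * L ≤ z * L := mul_le_mul_of_nonneg_right (le_of_lt hzδ) (le_of_lt hLpos)
        rw [hEdef, hE₀def]; linarith
      have hE₀u₁ : Real.exp E₀ < u₁ := by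
        have h1 : E₀ < Real.log u₁ := by rw [hE₀def]; linarith
        have := Real.exp_lt_exp.mpr h1
        rwa [Real.exp_log hu₁pos] at this
      obtain ⟨q₀, heq0, hq0⟩ := hkey (Real.exp E₀) (Real.exp_pos E₀) hE₀u₁
      rw [Real.log_exp] at heq0
      have hΦmono : Φ (Real.exp E₀) ≤ Φ (Real.exp E) :=
        hmono (Real.exp_pos E₀) (Real.exp_pos E) (Real.exp_le_exp.mpr hE₀E)
      have hΦE₀ := hrange (Real.exp E₀) (Real.exp_pos E₀)
      have hlogmono : Real.log (Φ (Real.exp E₀)) ≤ Real.log (Φ (Real.exp E)) :=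
        Real.log_le_log hΦE₀.1 hΦmono
      have hq₀le : q₀ ≤ tstar + 1 := by
        have := le_abs_self (q₀ - tstar)
        linarith
      obtain ⟨m, hmdef⟩ : ∃ m : ℝ, m = (Real.log κ - c) / L := ⟨_, rfl⟩
      have hmabs : |m| ≤ M / L := by rw [hmdef]; exact hm
      have hx0 : -δ + m < 0 := by
        have := le_abs_self m
        linarith
      have hx1 : -2 * δ ≤ -δ + m := by
        have h1 : -|m| ≤ m := neg_abs_le _
        linarith
      have hEL : E₀ / L = -δ + m := by
        rw [hE₀def, hmdef]; field_simp; ring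
      have hE₀L : 1 / L * (q₀ * E₀) = q₀ * (-δ + m) := by rw [← hEL]; ring
      have hlow1 : (tstar + 1) * (-δ + m) ≤ q₀ * (-δ + m) :=
        mul_le_mul_of_nonpos_right hq₀le (le_of_lt hx0)
      have hlow2 : (tstar + 1) * (-2 * δ) ≤ (tstar + 1) * (-δ + m) :=
        mul_le_mul_of_nonneg_left hx1 (by linarith)
      have hηδ : (tstar + 1) * (-2 * δ) = -(η / 2) := by
        linear_combination (-2 : ℝ) * hδ4
      have hlow : -(η / 2) ≤ 1 / L * Real.log (Φ (Real.exp E)) := by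
        have h1 : 1 / L * Real.log (Φ (Real.exp E₀)) ≤
            1 / L * Real.log (Φ (Real.exp E)) :=
          mul_le_mul_of_nonneg_left hlogmono (by positivity)
        rw [heq0, hE₀L] at h1
        linarith
      have hY1 : min (tstar * z) 0 ≤ 0 := min_le_right _ _
      have hY2 : -(η / 2) ≤ min (tstar * z) 0 := by
        apply le_min ?_ (by linarith)
        have h1 : tstar * (-δ) ≤ tstar * z :=
          mul_le_mul_of_nonneg_left (le_of_lt hzδ) (le_of_lt htstar)
        linarith [hδ4, hδpos, hη]
      rw [abs_lt]
      constructor <;> linarith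
  · -- z ≥ c/L : plateau regime
    push_neg at hcase
    have hminz : min 0 (z - c / L) = 0 := min_eq_left hcase
    have hu : ε ^ (-(min 0 (z - c / L) + Real.log κ / L)) = κ := by
      rw [hminz, Real.rpow_def_of_pos hε0, hLe]
      rw [show -L * (-((0:ℝ) + Real.log κ / L)) = Real.log κ by field_simp; ring]
      exact Real.exp_log hκ
    rw [hu]
    have hΦκ := hrange κ hκ
    have habs : |1 / L * Real.log (Φ κ)| = |Real.log (Φ κ)| / L := by
      rw [abs_mul, abs_of_pos (by positivity : (0:ℝ) < 1 / L)]
      ring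
    have hX1 : 1 / L * Real.log (Φ κ) ≤ |Real.log (Φ κ)| / L := by
      have := le_abs_self (1 / L * Real.log (Φ κ)); rw [habs] at this; linarith
    have hX2 : -(|Real.log (Φ κ)| / L) ≤ 1 / L * Real.log (Φ κ) := by
      have := neg_abs_le (1 / L * Real.log (Φ κ)); rw [habs] at this; linarith
    have hY1 : min (tstar * z) 0 ≤ 0 := min_le_right _ _
    have hY2 : -(tstar * |c| / L) ≤ min (tstar * z) 0 := by
      apply le_min ?_ (neg_nonpos.mpr (by positivity))
      have h1 : -|c| / L ≤ c / L := (div_le_div_iff_of_pos_right hLpos).mpr (neg_abs_le c)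
      have h2 : -|c| / L ≤ z := le_trans h1 (by linarith)
      have h3 := mul_le_mul_of_nonneg_left h2 (le_of_lt htstar)
      calc -(tstar * |c| / L) = tstar * (-|c| / L) := by ring
        _ ≤ tstar * z := h3
    have hfin : A₁ / L < η := (div_lt_iff₀ hLpos).mpr (by linarith [mul_comm η L])
    have hA₁L : A₁ / L = |Real.log (Φ κ)| / L + tstar * |c| / L := by
      rw [hA₁def]; ring
    rw [abs_lt]
    constructor <;> linarith
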